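/- Let ℬ be the union-closed family generated by the five sets {1,2,3}, {1,2,3,4}, {1,2,3,5}, {1,2,4,5} and {1,3,4,5} (subsets of ℕ). Then ℬ is not an FC-family: there exists a finite union-closed family 𝒜 of finite subsets of ℕ with ℬ ⊆ 𝒜 such that for every element x ∈ {1,2,3,4,5} we have 2·|{A ∈ 𝒜 : x ∈ A}| < |𝒜|. -/
import Mathlib

set_option maxHeartbeats 4000000
set_option maxRecDepth 100000

/-- A finite family of finite sets is union-closed if it is closed under pairwise unions. -/
def UnionClosed (𝒜 : Finset (Finset ℕ)) : Prop :=
  ∀ A ∈ 𝒜, ∀ B ∈ 𝒜, A ∪ B ∈ 𝒜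

/-- The union-closed family generated by a finite set system `𝒮`: the empty set together
with all unions of nonempty subfamilies of `𝒮`. -/
def generatedFamily (𝒮 : Finset (Finset ℕ)) : Finset (Finset ℕ) :=
  insert ∅ ((𝒮.powerset.filter (fun T => T.Nonempty)).image (fun T => T.sup id))

namespace NotFCAux

def five : Finset ℕ := {1,2,3,4,5}
def B6 : Finset (Finset ℕ) := {{1,2,3},{1,2,3,4},{1,2,3,5},{1,2,4,5},{1,3,4,5},{1,2,3,4,5}}
def bare : Finset (Finset ℕ) := insert ∅ B6
def bigG : Finset ℕ := Finset.Icc 6 76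
def pick (l : ℕ) : ℕ := if l < 23 then 1 else if l < 39 then 2 else if l < 55 then 3 else if l < 63 then 4 else 5
def sfam (p : ℕ) : Finset (Finset ℕ) := (five.erase p).powerset ∪ B6
def atomD (l : ℕ) : Finset ℕ := bigG.erase (6+l)

def part1 : Finset (Finset ℕ) := bare
def part2 : Finset (Finset ℕ) := five.powerset.image (· ∪ bigG)
def part3 : Finset (Finset ℕ) := (Finset.range 71).biUnion (fun l => (sfam (pick l)).image (· ∪ atomD l))
def FamA : Finset (Finset ℕ) := part1 ∪ part2 ∪ part3

/- ------- basic decidable facts ------- -/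
lemma bare_subset_five : ∀ A ∈ bare, A ⊆ five := by decide
lemma sfam_subset_five : ∀ p ∈ five, ∀ T ∈ sfam p, T ⊆ five := by decide
lemma bare_closed : ∀ A ∈ bare, ∀ B ∈ bare, A ∪ B ∈ bare := by decide
lemma bare_absorb : ∀ p ∈ five, ∀ A ∈ bare, ∀ T ∈ sfam p, A ∪ T ∈ sfam p := by decide
lemma sfam_closed : ∀ p ∈ five, ∀ A ∈ sfam p, ∀ B ∈ sfam p, A ∪ B ∈ sfam p := by decide
lemma disjoint_five_bigG : Disjoint five bigG := by decide
lemma five_le5 : ∀ x ∈ five, x ≤ 5 := by decide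
lemma bigG_card : bigG.card = 71 := by decide

lemma pick_mem_five (l : ℕ) : pick l ∈ five := by
  unfold pick; split_ifs <;> decide

lemma union4 (a b c d : Finset ℕ) : (a ∪ b) ∪ (c ∪ d) = (a ∪ c) ∪ (b ∪ d) := by
  ext x; simp only [Finset.mem_union]; tauto

lemma mem_bigG_of_lt (l : ℕ) (hl : l < 71) : 6 + l ∈ bigG := by
  simp only [bigG, Finset.mem_Icc]; omega

lemma erase_union_erase {a b : ℕ} (ha : a ∈ bigG) (hb : b ∈ bigG) (hab : a ≠ b) :
    bigG.erase a ∪ bigG.erase b = bigG := by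
  ext x
  simp only [Finset.mem_union, Finset.mem_erase]
  constructor
  · rintro (⟨_, h⟩ | ⟨_, h⟩) <;> exact h
  · intro hx
    rcases eq_or_ne x a with rfl | hxa
    · exact Or.inr ⟨hab, hx⟩
    · exact Or.inl ⟨hxa, hx⟩

lemma atomD_subset : ∀ l, atomD l ⊆ bigG := fun l => Finset.erase_subset _ _

lemma notMem_bigG_of_five {x : ℕ} (hx : x ∈ five) : x ∉ bigG :=
  Finset.disjoint_left.mp disjoint_five_bigG hx

lemma key_inter {T W : Finset ℕ} (hT : T ⊆ five) (hW : W ⊆ bigG) : (T ∪ W) ∩ bigG = W := by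
  ext x
  simp only [Finset.mem_inter, Finset.mem_union]
  constructor
  · rintro ⟨h1 | h1, h2⟩
    · exact absurd h2 (notMem_bigG_of_five (hT h1))
    · exact h1
  · intro h; exact ⟨Or.inr h, hW h⟩

lemma union_cancel {T T' W : Finset ℕ} (hT : T ⊆ five) (hT' : T' ⊆ five) (hW : W ⊆ bigG)
    (h : T ∪ W = T' ∪ W) : T = T' := by
  have e : ∀ {S : Finset ℕ}, S ⊆ five → (S ∪ W) \ bigG = S := by
    intro S hS
    ext x
    simp only [Finset.mem_sdiff, Finset.mem_union]
    constructor
    · rintro ⟨h1 | h1, h2⟩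
      · exact h1
      · exact absurd (hW h1) h2
    · intro hx; exact ⟨Or.inl hx, notMem_bigG_of_five (hS hx)⟩
  calc T = (T ∪ W) \ bigG := (e hT).symm
    _ = (T' ∪ W) \ bigG := by rw [h]
    _ = T' := e hT'

/- ------- membership helpers ------- -/
lemma mem_part2 {T : Finset ℕ} (hT : T ⊆ five) : T ∪ bigG ∈ part2 :=
  Finset.mem_image.mpr ⟨T, Finset.mem_powerset.mpr hT, rfl⟩

lemma mem_part3 {l : ℕ} (hl : l < 71) {T : Finset ℕ} (hT : T ∈ sfam (pick l)) :
    T ∪ atomD l ∈ part3 :=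
  Finset.mem_biUnion.mpr ⟨l, Finset.mem_range.mpr hl, Finset.mem_image.mpr ⟨T, hT, rfl⟩⟩

lemma memA_1 {A : Finset ℕ} (h : A ∈ part1) : A ∈ FamA :=
  Finset.mem_union_left _ (Finset.mem_union_left _ h)
lemma memA_2 {A : Finset ℕ} (h : A ∈ part2) : A ∈ FamA :=
  Finset.mem_union_left _ (Finset.mem_union_right _ h)
lemma memA_3 {A : Finset ℕ} (h : A ∈ part3) : A ∈ FamA :=
  Finset.mem_union_right _ h

/- ------- union closedness ------- -/
theorem famA_closed : UnionClosed FamA := by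
  have hGG : bigG ∪ bigG = bigG := Finset.union_self _
  have hGD : ∀ l, bigG ∪ atomD l = bigG := fun l =>
    Finset.union_eq_left.mpr (atomD_subset l)
  intro A hA B hB
  rcases Finset.mem_union.mp hA with hA' | hA3
  · rcases Finset.mem_union.mp hA' with hA1 | hA2
    · -- A ∈ part1 (bare)
      rcases Finset.mem_union.mp hB with hB' | hB3
      · rcases Finset.mem_union.mp hB' with hB1 | hB2
        · exact memA_1 (bare_closed A hA1 B hB1)
        · obtain ⟨T, hT, rfl⟩ := Finset.mem_image.mp hB2
          rw [← Finset.union_assoc]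
          exact memA_2 (mem_part2 (Finset.union_subset (bare_subset_five A hA1)
            (Finset.mem_powerset.mp hT)))
      · obtain ⟨l, hl, hB'⟩ := Finset.mem_biUnion.mp hB3
        obtain ⟨T, hT, rfl⟩ := Finset.mem_image.mp hB'
        rw [← Finset.union_assoc]
        exact memA_3 (mem_part3 (Finset.mem_range.mp hl)
          (bare_absorb _ (pick_mem_five l) A hA1 T hT))
    · -- A ∈ part2
      obtain ⟨T, hT, rfl⟩ := Finset.mem_image.mp hA2
      have hT5 := Finset.mem_powerset.mp hT
      rcases Finset.mem_union.mp hB with hB' | hB3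
      · rcases Finset.mem_union.mp hB' with hB1 | hB2
        · have : T ∪ bigG ∪ B = (T ∪ B) ∪ bigG := by
            rw [Finset.union_right_comm]
          rw [this]
          exact memA_2 (mem_part2 (Finset.union_subset hT5 (bare_subset_five B hB1)))
        · obtain ⟨T', hT', rfl⟩ := Finset.mem_image.mp hB2
          rw [union4, hGG]
          exact memA_2 (mem_part2 (Finset.union_subset hT5 (Finset.mem_powerset.mp hT')))
      · obtain ⟨l, hl, hB'⟩ := Finset.mem_biUnion.mp hB3
        obtain ⟨T', hT', rfl⟩ := Finset.mem_image.mp hB'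
        rw [union4, hGD]
        exact memA_2 (mem_part2 (Finset.union_subset hT5
          (sfam_subset_five _ (pick_mem_five l) T' hT')))
  · -- A ∈ part3
    obtain ⟨l, hl, hA'⟩ := Finset.mem_biUnion.mp hA3
    have hl71 := Finset.mem_range.mp hl
    obtain ⟨T, hT, rfl⟩ := Finset.mem_image.mp hA'
    have hT5 := sfam_subset_five _ (pick_mem_five l) T hT
    rcases Finset.mem_union.mp hB with hB' | hB3
    · rcases Finset.mem_union.mp hB' with hB1 | hB2
      · have : T ∪ atomD l ∪ B = (B ∪ T) ∪ atomD l := by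
          rw [Finset.union_right_comm, Finset.union_comm T B]
        rw [this]
        exact memA_3 (mem_part3 hl71 (bare_absorb _ (pick_mem_five l) B hB1 T hT))
      · obtain ⟨T', hT', rfl⟩ := Finset.mem_image.mp hB2
        rw [union4, Finset.union_comm (atomD l) bigG, hGD]
        exact memA_2 (mem_part2 (Finset.union_subset hT5 (Finset.mem_powerset.mp hT')))
    · obtain ⟨m, hm, hB'⟩ := Finset.mem_biUnion.mp hB3
      have hm71 := Finset.mem_range.mp hm
      obtain ⟨T', hT', rfl⟩ := Finset.mem_image.mp hB'
      have hT'5 := sfam_subset_five _ (pick_mem_five m) T' hT'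
      rcases eq_or_ne l m with rfl | hlm
      · rw [union4, Finset.union_self]
        exact memA_3 (mem_part3 hl71 (sfam_closed _ (pick_mem_five l) T hT T' hT'))
      · have hDD : atomD l ∪ atomD m = bigG :=
          erase_union_erase (mem_bigG_of_lt l hl71) (mem_bigG_of_lt m hm71) (by omega)
        rw [union4, hDD]
        exact memA_2 (mem_part2 (Finset.union_subset hT5 hT'5))

/- ------- cardinalities ------- -/

lemma interG_part1 {A : Finset ℕ} (h : A ∈ part1) : A ∩ bigG = ∅ := by
  have h5 := bare_subset_five A h
  have : A ∪ ∅ = A := Finset.union_empty A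
  calc A ∩ bigG = (A ∪ ∅) ∩ bigG := by rw [this]
    _ = ∅ := key_inter h5 (Finset.empty_subset _)

lemma interG_part2 {A : Finset ℕ} (h : A ∈ part2) : A ∩ bigG = bigG := by
  obtain ⟨T, hT, rfl⟩ := Finset.mem_image.mp h
  exact key_inter (Finset.mem_powerset.mp hT) (le_refl _)

lemma sixl_notMem {l : ℕ} {A : Finset ℕ}
    (h : A ∈ (sfam (pick l)).image (· ∪ atomD l)) : 6 + l ∉ A := by
  obtain ⟨T, hT, rfl⟩ := Finset.mem_image.mp h
  intro hmem
  rcases Finset.mem_union.mp hmem with h1 | h1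
  · have := five_le5 _ (sfam_subset_five _ (pick_mem_five l) T hT h1)
    omega
  · exact (Finset.notMem_erase _ _) h1

lemma sixm_mem {l m : ℕ} (hl : l < 71) (hlm : l ≠ m) {A : Finset ℕ}
    (h : A ∈ (sfam (pick m)).image (· ∪ atomD m)) : 6 + l ∈ A := by
  obtain ⟨T, hT, rfl⟩ := Finset.mem_image.mp h
  exact Finset.mem_union_right _ (Finset.mem_erase.mpr ⟨by omega, mem_bigG_of_lt l hl⟩)

lemma part3_blocks_disjoint : ∀ l ∈ Finset.range 71, ∀ m ∈ Finset.range 71, l ≠ m →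
    Disjoint ((sfam (pick l)).image (· ∪ atomD l)) ((sfam (pick m)).image (· ∪ atomD m)) := by
  intro l hl m hm hlm
  rw [Finset.disjoint_left]
  intro A hAl hAm
  exact sixl_notMem hAl (sixm_mem (Finset.mem_range.mp hl) hlm hAm)

lemma interG_part3 {A : Finset ℕ} (h : A ∈ part3) : ∃ l < 71, A ∩ bigG = atomD l := by
  obtain ⟨l, hl, hA⟩ := Finset.mem_biUnion.mp h
  obtain ⟨T, hT, rfl⟩ := Finset.mem_image.mp hA
  exact ⟨l, Finset.mem_range.mp hl,
    key_inter (sfam_subset_five _ (pick_mem_five l) T hT) (atomD_subset l)⟩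

lemma atomD_card (l : ℕ) (hl : l < 71) : (atomD l).card = 70 := by
  have : (atomD l).card = bigG.card - 1 :=
    Finset.card_erase_of_mem (mem_bigG_of_lt l hl)
  rw [this, bigG_card]

lemma disj12 : Disjoint part1 part2 := by
  rw [Finset.disjoint_left]
  intro A h1 h2
  have e1 := interG_part1 h1
  have e2 := interG_part2 h2
  rw [e1] at e2
  have : bigG.card = 0 := by rw [← e2]; rfl
  rw [bigG_card] at this; omega

lemma disj13 : Disjoint part1 part3 := by
  rw [Finset.disjoint_left]
  intro A h1 h3
  obtain ⟨l, hl, e3⟩ := interG_part3 h3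
  have e1 := interG_part1 h1
  rw [e1] at e3
  have : (atomD l).card = 0 := by rw [← e3]; rfl
  rw [atomD_card l hl] at this; omega

lemma disj23 : Disjoint part2 part3 := by
  rw [Finset.disjoint_left]
  intro A h2 h3
  obtain ⟨l, hl, e3⟩ := interG_part3 h3
  have e2 := interG_part2 h2
  rw [e2] at e3
  have : bigG.card = 70 := by rw [e3]; exact atomD_card l hl
  rw [bigG_card] at this; omega

lemma injOn_unionG {s : Finset (Finset ℕ)} (hs : ∀ T ∈ s, T ⊆ five) :
    Set.InjOn (· ∪ bigG) s := by
  intro T hT T' hT' h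
  exact union_cancel (hs T hT) (hs T' hT') (le_refl _) h

lemma injOn_unionD (l : ℕ) {s : Finset (Finset ℕ)} (hs : ∀ T ∈ s, T ⊆ five) :
    Set.InjOn (· ∪ atomD l) s := by
  intro T hT T' hT' h
  exact union_cancel (hs T hT) (hs T' hT') (atomD_subset l) h

lemma part1_card : part1.card = 7 := by decide

lemma part2_card : part2.card = 32 := by
  rw [part2, Finset.card_image_of_injOn (injOn_unionG (fun T hT => Finset.mem_powerset.mp hT))]
  decide

lemma part3_card : part3.card = 1498 := by
  rw [part3, Finset.card_biUnion part3_blocks_disjoint]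
  have : ∀ l ∈ Finset.range 71,
      ((sfam (pick l)).image (· ∪ atomD l)).card = (sfam (pick l)).card := by
    intro l _
    exact Finset.card_image_of_injOn
      (injOn_unionD l (fun T hT => sfam_subset_five _ (pick_mem_five l) T hT))
  rw [Finset.sum_congr rfl this]
  decide

lemma famA_card : FamA.card = 1537 := by
  rw [FamA, Finset.card_union_of_disjoint (by
      rw [Finset.disjoint_union_left]; exact ⟨disj13, disj23⟩),
    Finset.card_union_of_disjoint disj12, part1_card, part2_card, part3_card]

/- ------- filtered cardinalities ------- -/

lemma mem_union_iff_left {x : ℕ} (hx : x ∈ five) {T W : Finset ℕ} (hW : W ⊆ bigG) :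
    x ∈ T ∪ W ↔ x ∈ T := by
  constructor
  · intro h
    rcases Finset.mem_union.mp h with h1 | h1
    · exact h1
    · exact absurd (hW h1) (notMem_bigG_of_five hx)
  · exact fun h => Finset.mem_union_left _ h

lemma filter_part2 {x : ℕ} (hx : x ∈ five) :
    part2.filter (fun A => x ∈ A) =
      (five.powerset.filter (fun T => x ∈ T)).image (· ∪ bigG) := by
  ext A
  simp only [Finset.mem_filter, Finset.mem_image, part2]
  constructor
  · rintro ⟨⟨T, hT, rfl⟩, hxA⟩
    exact ⟨T, ⟨hT, (mem_union_iff_left hx (le_refl _)).mp hxA⟩, rfl⟩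
  · rintro ⟨T, ⟨hT, hxT⟩, rfl⟩
    exact ⟨⟨T, hT, rfl⟩, Finset.mem_union_left _ hxT⟩

lemma filter_block {x : ℕ} (hx : x ∈ five) (l : ℕ) :
    ((sfam (pick l)).image (· ∪ atomD l)).filter (fun A => x ∈ A) =
      ((sfam (pick l)).filter (fun T => x ∈ T)).image (· ∪ atomD l) := by
  ext A
  simp only [Finset.mem_filter, Finset.mem_image]
  constructor
  · rintro ⟨⟨T, hT, rfl⟩, hxA⟩
    exact ⟨T, ⟨hT, (mem_union_iff_left hx (atomD_subset l)).mp hxA⟩, rfl⟩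
  · rintro ⟨T, ⟨hT, hxT⟩, rfl⟩
    exact ⟨⟨T, hT, rfl⟩, Finset.mem_union_left _ hxT⟩

lemma filter_part2_card {x : ℕ} (hx : x ∈ five) :
    (part2.filter (fun A => x ∈ A)).card = (five.powerset.filter (fun T => x ∈ T)).card := by
  rw [filter_part2 hx]
  exact Finset.card_image_of_injOn (injOn_unionG (fun T hT =>
    Finset.mem_powerset.mp (Finset.mem_filter.mp hT).1))

lemma filter_part3_card {x : ℕ} (hx : x ∈ five) :
    (part3.filter (fun A => x ∈ A)).card =
      ∑ l ∈ Finset.range 71, ((sfam (pick l)).filter (fun T => x ∈ T)).card := by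
  rw [part3, Finset.filter_biUnion]
  rw [Finset.card_biUnion (fun l hl m hm hlm =>
    Finset.disjoint_filter_filter (part3_blocks_disjoint l hl m hm hlm))]
  refine Finset.sum_congr rfl (fun l _ => ?_)
  rw [filter_block hx l]
  exact Finset.card_image_of_injOn (injOn_unionD l (fun T hT =>
    sfam_subset_five _ (pick_mem_five l) T (Finset.mem_filter.mp hT).1))

lemma famA_filter_card {x : ℕ} (hx : x ∈ five) :
    (FamA.filter (fun A => x ∈ A)).card =
      (part1.filter (fun A => x ∈ A)).card + (five.powerset.filter (fun T => x ∈ T)).card +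
      ∑ l ∈ Finset.range 71, ((sfam (pick l)).filter (fun T => x ∈ T)).card := by
  rw [FamA, Finset.filter_union, Finset.filter_union,
    Finset.card_union_of_disjoint (by
      rw [Finset.disjoint_union_left]
      exact ⟨Finset.disjoint_filter_filter disj13, Finset.disjoint_filter_filter disj23⟩),
    Finset.card_union_of_disjoint (Finset.disjoint_filter_filter disj12),
    filter_part2_card hx, filter_part3_card hx]

lemma famA_filter_eq : ∀ x ∈ five, (FamA.filter (fun A => x ∈ A)).card = 768 := by
  intro x hx
  rw [famA_filter_card hx]
  fin_cases hx <;> decide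

end NotFCAux

/-- The family generated by {1,2,3}, {1,2,3,4}, {1,2,3,5}, {1,2,4,5} and {1,3,4,5}
is not FC. -/
theorem not_fc_family_three :
    ∃ 𝒜 : Finset (Finset ℕ), UnionClosed 𝒜 ∧
      generatedFamily {({1,2,3} : Finset ℕ), {1,2,3,4}, {1,2,3,5}, {1,2,4,5}, {1,3,4,5}} ⊆ 𝒜 ∧
      ∀ x ∈ ({1,2,3,4,5} : Finset ℕ),
        2 * (𝒜.filter (fun A => x ∈ A)).card < 𝒜.card := by
  refine ⟨NotFCAux.FamA, NotFCAux.famA_closed, ?_, ?_⟩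
  · have h : generatedFamily {({1,2,3} : Finset ℕ), {1,2,3,4}, {1,2,3,5}, {1,2,4,5}, {1,3,4,5}}
        = NotFCAux.part1 := by decide
    rw [h]
    exact fun A hA => NotFCAux.memA_1 hA
  · intro x hx
    have hx5 : x ∈ NotFCAux.five := hx
    rw [NotFCAux.famA_filter_eq x hx5, NotFCAux.famA_card]
    omega
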